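/- For the path P_n on n ≥ 4 vertices, J(P_n) = (1+x) J(P_{n−1}) + x(y−1)( J(P_{n−2}) + y J(P_{n−3}) ). -/

import Mathlib

open Finset
open scoped Classical

/-- External neighbourhood N(W) = N[W] \ W of a vertex subset. -/
noncomputable def extN {V : Type} [Fintype V] (G : SimpleGraph V) (W : Finset V) : Finset V :=
  Finset.univ.filter (fun v => v ∉ W ∧ ∃ w ∈ W, G.Adj v w)

/-- The bivariate domination polynomial J(G;x,y) = ∑_{W ⊆ V} x^|W| y^|N(W)|. -/
noncomputable def JP {V : Type} [Fintype V] (G : SimpleGraph V) (x y : ℝ) : ℝ :=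
  ∑ W : Finset V, x ^ W.card * y ^ (extN G W).card

/-- Vertex deletion G − a. -/
noncomputable def Gdel {V : Type} (G : SimpleGraph V) (a : V) : SimpleGraph {v : V // v ≠ a} :=
  G.induce {v : V | v ≠ a}

/-- Deletion of a set of vertices. -/
noncomputable def GdelSet {V : Type} (G : SimpleGraph V) (S : Set V) : SimpleGraph {v : V // v ∉ S} :=
  G.induce {v : V | v ∉ S}

/-- Vertex contraction G∖a: join all neighbours of a, then delete a. -/
noncomputable def Gcon {V : Type} (G : SimpleGraph V) (a : V) : SimpleGraph {v : V // v ≠ a} where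
  Adj u v := u ≠ v ∧ (G.Adj u.val v.val ∨ (G.Adj u.val a ∧ G.Adj a v.val))
  symm := ⟨fun _ _ ⟨h1, h2⟩ =>
    ⟨fun e => h1 e.symm, h2.imp G.adj_symm (fun ⟨p, q⟩ => ⟨G.adj_symm q, G.adj_symm p⟩)⟩⟩
  loopless := ⟨fun _ h => h.1 rfl⟩

section Aux
open SimpleGraph

def iemb (m : ℕ) : Fin m ↪ Fin (m+1) := ⟨Fin.castSucc, Fin.castSucc_injective m⟩

lemma mem_extN {V : Type} [Fintype V] {G : SimpleGraph V} {W : Finset V} {v : V} :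
    v ∈ extN G W ↔ v ∉ W ∧ ∃ w ∈ W, G.Adj v w := by simp [extN]

lemma last_not_mem_map' {m : ℕ} (W : Finset (Fin m)) : Fin.last m ∉ W.map (iemb m) := by
  simp only [Finset.mem_map]
  rintro ⟨a, -, ha⟩
  have := a.castSucc_lt_last
  simp [iemb] at ha

lemma castSucc_mem_map {m : ℕ} {W : Finset (Fin m)} {a : Fin m} :
    a.castSucc ∈ W.map (iemb m) ↔ a ∈ W := by
  constructor
  · rintro h
    simp only [Finset.mem_map] at h
    obtain ⟨b, hb, hba⟩ := h
    have : b = a := Fin.castSucc_injective m hba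
    exact this ▸ hb
  · intro h; exact Finset.mem_map_of_mem _ h

lemma adj_castSucc {m : ℕ} {a b : Fin (m+1)} :
    (pathGraph (m+2)).Adj a.castSucc b.castSucc ↔ (pathGraph (m+1)).Adj a b := by
  simp [pathGraph_adj, Fin.coe_castSucc]

lemma adj_last_iff {k : ℕ} {w : Fin (k+2)} :
    (pathGraph (k+2)).Adj (Fin.last (k+1)) w ↔ w = (Fin.last k).castSucc := by
  simp only [pathGraph_adj, Fin.val_last, Fin.coe_castSucc]
  have := w.isLt
  constructor
  · intro h; apply Fin.ext; simp only [Fin.coe_castSucc, Fin.val_last]; omega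
  · intro h; subst h; simp

lemma adj_last_castSucc {k : ℕ} {a : Fin (k+1)} :
    (pathGraph (k+2)).Adj (Fin.last (k+1)) a.castSucc ↔ a = Fin.last k := by
  rw [adj_last_iff]
  exact ⟨fun h => Fin.castSucc_injective _ h, fun h => by rw [h]⟩

lemma last_mem_extN_iff {k : ℕ} {W : Finset (Fin (k+2))} :
    Fin.last (k+1) ∈ extN (pathGraph (k+2)) W
      ↔ Fin.last (k+1) ∉ W ∧ (Fin.last k).castSucc ∈ W := by
  rw [mem_extN]
  constructor
  · rintro ⟨h1, w, hw, hadj⟩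
    rw [adj_last_iff] at hadj
    exact ⟨h1, hadj ▸ hw⟩
  · rintro ⟨h1, h2⟩
    exact ⟨h1, _, h2, adj_last_iff.mpr rfl⟩

lemma e1set (k : ℕ) (W : Finset (Fin (k+1))) :
    extN (pathGraph (k+2)) (W.map (iemb (k+1)))
      = (extN (pathGraph (k+1)) W).map (iemb (k+1))
        ∪ (if Fin.last k ∈ W then {Fin.last (k+1)} else ∅) := by
  ext v
  induction v using Fin.lastCases with
  | last =>
    simp only [mem_extN, Finset.mem_union, last_not_mem_map', false_or]
    constructor
    · rintro ⟨-, w, hw, hadj⟩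
      obtain ⟨u, hu, rfl⟩ := Finset.mem_map.mp hw
      have heq : (iemb (k+1)) u = u.castSucc := rfl
      rw [heq, adj_last_castSucc] at hadj
      subst hadj
      simp [hu]
    · intro h
      split at h
      · refine ⟨not_false, (Fin.last k).castSucc, ?_, ?_⟩
        · exact castSucc_mem_map.mpr ‹Fin.last k ∈ W›
        · exact adj_last_castSucc.mpr rfl
      · simp at h
  | cast u =>
    have hne : u.castSucc ≠ Fin.last (k+1) := Fin.ne_of_lt u.castSucc_lt_last
    simp only [mem_extN, Finset.mem_union, castSucc_mem_map]
    constructor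
    · rintro ⟨hu, w, hw, hadj⟩
      obtain ⟨w', hw', rfl⟩ := Finset.mem_map.mp hw
      have heq : (iemb (k+1)) w' = w'.castSucc := rfl
      rw [heq, adj_castSucc] at hadj
      left
      exact ⟨hu, w', hw', hadj⟩
    · intro h
      rcases h with ⟨hu, w', hw', hadj⟩ | h
      · exact ⟨hu, w'.castSucc, castSucc_mem_map.mpr hw', adj_castSucc.mpr hadj⟩
      · split at h
        · simp only [Finset.mem_singleton] at h; exact absurd h hne
        · simp at h

lemma e1card (k : ℕ) (W : Finset (Fin (k+1))) :
    (extN (pathGraph (k+2)) (W.map (iemb (k+1)))).card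
      = (extN (pathGraph (k+1)) W).card + (if Fin.last k ∈ W then 1 else 0) := by
  rw [e1set, Finset.card_union_of_disjoint, Finset.card_map]
  · congr 1; split <;> simp
  · split
    · simp only [Finset.disjoint_singleton_right]
      exact last_not_mem_map' _
    · simp

lemma e2set (k : ℕ) (W : Finset (Fin (k+2))) :
    extN (pathGraph (k+3)) (insert (Fin.last (k+2)) (W.map (iemb (k+2))))
      = ((extN (pathGraph (k+2)) W).erase (Fin.last (k+1))
          ∪ (if Fin.last (k+1) ∉ W then {Fin.last (k+1)} else ∅)).map (iemb (k+2)) := by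
  ext v
  induction v using Fin.lastCases with
  | last =>
    simp only [mem_extN, Finset.mem_insert, Finset.mem_map]
    constructor
    · rintro ⟨h, -⟩; exact absurd (Or.inl trivial) h
    · rintro ⟨a, -, ha⟩
      have : (iemb (k+2)) a = a.castSucc := rfl
      rw [this] at ha
      exact absurd ha (Fin.ne_of_lt a.castSucc_lt_last)
  | cast u =>
    have hne : u.castSucc ≠ Fin.last (k+2) := Fin.ne_of_lt u.castSucc_lt_last
    rw [castSucc_mem_map, mem_extN]
    simp only [Finset.mem_insert, hne, false_or, castSucc_mem_map, Finset.mem_union,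
      Finset.mem_erase]
    constructor
    · rintro ⟨hu, w, hw, hadj⟩
      rcases hw with rfl | hw'
      · rw [(pathGraph (k+3)).adj_comm, adj_last_castSucc] at hadj
        subst hadj
        right
        simp [hu]
      · obtain ⟨w', hw'', rfl⟩ := Finset.mem_map.mp hw'
        have heq : (iemb (k+2)) w' = w'.castSucc := rfl
        rw [heq, adj_castSucc] at hadj
        by_cases hub : u = Fin.last (k+1)
        · subst hub; right; simp [hu]
        · left; exact ⟨hub, mem_extN.mpr ⟨hu, w', hw'', hadj⟩⟩
    · intro h
      rcases h with ⟨hub, hu⟩ | h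
      · obtain ⟨hu1, w', hw', hadj⟩ := mem_extN.mp hu
        exact ⟨hu1, w'.castSucc, Or.inr (castSucc_mem_map.mpr hw'),
          adj_castSucc.mpr hadj⟩
      · split at h
        · simp only [Finset.mem_singleton] at h
          subst h
          refine ⟨‹_›, Fin.last (k+2), Or.inl rfl, ?_⟩
          exact ((pathGraph (k+3)).adj_comm _ _).mp (adj_last_castSucc.mpr rfl)
        · simp at h

lemma e2card (k : ℕ) (W : Finset (Fin (k+2))) :
    (extN (pathGraph (k+3)) (insert (Fin.last (k+2)) (W.map (iemb (k+2))))).card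
      = (extN (pathGraph (k+2)) W).card
        + (if Fin.last (k+1) ∉ W ∧ (Fin.last k).castSucc ∉ W then 1 else 0) := by
  rw [e2set, Finset.card_map, Finset.card_union_of_disjoint]
  · by_cases hb : Fin.last (k+1) ∈ W
    · have hbS : Fin.last (k+1) ∉ extN (pathGraph (k+2)) W := by
        intro h; exact (last_mem_extN_iff.mp h).1 hb
      rw [Finset.erase_eq_of_notMem hbS]
      simp [hb]
    · by_cases hc : (Fin.last k).castSucc ∈ W
      · have hbS : Fin.last (k+1) ∈ extN (pathGraph (k+2)) W :=
          last_mem_extN_iff.mpr ⟨hb, hc⟩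
        rw [Finset.card_erase_of_mem hbS, if_pos hb, if_neg (fun h => h.2 hc)]
        have := Finset.card_pos.mpr ⟨_, hbS⟩
        simp only [Finset.card_singleton]
        omega
      · have hbS : Fin.last (k+1) ∉ extN (pathGraph (k+2)) W := by
          intro h; exact hc (last_mem_extN_iff.mp h).2
        rw [Finset.erase_eq_of_notMem hbS]
        simp [hb, hc]
  · split
    · simp
    · simp

noncomputable def pull {m : ℕ} (S : Finset (Fin (m+1))) : Finset (Fin m) :=
  Finset.univ.filter (fun a => a.castSucc ∈ S)

lemma pull_map {m : ℕ} (W : Finset (Fin m)) : pull (W.map (iemb m)) = W := by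
  ext a
  simp only [pull, Finset.mem_filter, Finset.mem_univ, true_and, Finset.mem_map]
  constructor
  · rintro ⟨b, hb, hba⟩
    have : b = a := Fin.castSucc_injective m hba
    exact this ▸ hb
  · intro h; exact ⟨a, h, rfl⟩

lemma map_pull {m : ℕ} (S : Finset (Fin (m+1))) (h : Fin.last m ∉ S) :
    (pull S).map (iemb m) = S := by
  ext v
  induction v using Fin.lastCases with
  | last =>
    simp only [Finset.mem_map, h, iff_false]
    rintro ⟨a, -, ha⟩
    have heq : (iemb m) a = a.castSucc := rfl
    rw [heq] at ha
    have := a.castSucc_lt_last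
    rw [ha] at this
    exact lt_irrefl _ this
  | cast u =>
    simp only [Finset.mem_map, pull, Finset.mem_filter, Finset.mem_univ, true_and]
    constructor
    · rintro ⟨b, hb, hba⟩
      have heq : (iemb m) b = b.castSucc := rfl
      rw [heq] at hba
      have : b = u := Fin.castSucc_injective m hba
      exact this ▸ hb
    · intro h; exact ⟨u, h, rfl⟩

lemma map_pull_erase {m : ℕ} (S : Finset (Fin (m+1))) (h : Fin.last m ∈ S) :
    insert (Fin.last m) ((pull (S.erase (Fin.last m))).map (iemb m)) = S := by
  rw [map_pull _ (Finset.notMem_erase _ _), Finset.insert_erase h]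

lemma pull_erase_insert {m : ℕ} (W : Finset (Fin m)) :
    pull ((insert (Fin.last m) (W.map (iemb m))).erase (Fin.last m)) = W := by
  rw [Finset.erase_insert (last_not_mem_map' W), pull_map]

lemma sum_split (m : ℕ) (f : Finset (Fin (m+1)) → ℝ) :
    ∑ W : Finset (Fin (m+1)), f W
      = ∑ W : Finset (Fin m), f (W.map (iemb m))
        + ∑ W : Finset (Fin m), f (insert (Fin.last m) (W.map (iemb m))) := by
  rw [← Finset.sum_filter_add_sum_filter_not Finset.univ (fun W => Fin.last m ∉ W)]
  congr 1
  · refine Finset.sum_nbij' (fun S => pull S) (fun W => W.map (iemb m)) ?_ ?_ ?_ ?_ ?_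
    · intro a _; exact Finset.mem_univ _
    · intro W _
      exact Finset.mem_filter.mpr ⟨Finset.mem_univ _, last_not_mem_map' W⟩
    · intro S hS
      exact map_pull S (Finset.mem_filter.mp hS).2
    · intro W _; exact pull_map W
    · intro S hS
      rw [map_pull S (Finset.mem_filter.mp hS).2]
  · refine Finset.sum_nbij' (fun S => pull (S.erase (Fin.last m)))
      (fun W => insert (Fin.last m) (W.map (iemb m))) ?_ ?_ ?_ ?_ ?_
    · intro a _; exact Finset.mem_univ _
    · intro W _
      refine Finset.mem_filter.mpr ⟨Finset.mem_univ _, ?_⟩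
      simp only [not_not]
      exact Finset.mem_insert_self _ _
    · intro S hS
      have h2 := (Finset.mem_filter.mp hS).2
      simp only [not_not] at h2
      exact map_pull_erase S h2
    · intro W _; exact pull_erase_insert W
    · intro S hS
      have h2 := (Finset.mem_filter.mp hS).2
      simp only [not_not] at h2
      rw [map_pull_erase S h2]

lemma pow_ite_term (x y : ℝ) (c e : ℕ) (P : Prop) [Decidable P] :
    x ^ c * y ^ (e + (if P then 1 else 0))
      = x ^ c * y ^ e + (y - 1) * (if P then x ^ c * y ^ e else 0) := by
  by_cases h : P
  · simp only [h, if_true, pow_succ]; ring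
  · simp [h]

lemma pow_ite_term2 (x y : ℝ) (c e : ℕ) (P : Prop) [Decidable P] :
    x * (x ^ c * y ^ (e + (if P then 1 else 0)))
      = x * (x ^ c * y ^ e) + ((y - 1) * x) * (if P then x ^ c * y ^ e else 0) := by
  by_cases h : P
  · simp only [h, if_true, pow_succ]; ring
  · simp [h]

lemma term_insert (m : ℕ) (x y : ℝ) (W : Finset (Fin (m+2))) :
    x ^ (insert (Fin.last (m+2)) (W.map (iemb (m+2)))).card
        * y ^ (extN (pathGraph (m+3)) (insert (Fin.last (m+2)) (W.map (iemb (m+2))))).card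
      = x * (x ^ W.card * y ^ ((extN (pathGraph (m+2)) W).card
          + (if Fin.last (m+1) ∉ W ∧ (Fin.last m).castSucc ∉ W then 1 else 0))) := by
  rw [Finset.card_insert_of_notMem (last_not_mem_map' _), Finset.card_map, e2card m W,
    pow_succ]
  ring

lemma term_map (m : ℕ) (x y : ℝ) (W : Finset (Fin (m+1))) :
    x ^ (W.map (iemb (m+1))).card * y ^ (extN (pathGraph (m+2)) (W.map (iemb (m+1)))).card
      = x ^ W.card * y ^ ((extN (pathGraph (m+1)) W).card
          + (if Fin.last m ∈ W then 1 else 0)) := by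
  rw [Finset.card_map, e1card m W]

noncomputable def Bsum (j : ℕ) (x y : ℝ) : ℝ :=
  ∑ W : Finset (Fin (j+1)),
    if Fin.last j ∈ W then x ^ W.card * y ^ (extN (pathGraph (j+1)) W).card else 0

noncomputable def Dsum (j : ℕ) (x y : ℝ) : ℝ :=
  ∑ W : Finset (Fin (j+1)),
    if Fin.last j ∉ W then x ^ W.card * y ^ (extN (pathGraph (j+1)) W).card else 0

noncomputable def Csum (j : ℕ) (x y : ℝ) : ℝ :=
  ∑ W : Finset (Fin (j+2)),
    if Fin.last (j+1) ∉ W ∧ (Fin.last j).castSucc ∉ W then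
      x ^ W.card * y ^ (extN (pathGraph (j+2)) W).card else 0

lemma Bsum_eq (m : ℕ) (x y : ℝ) :
    Bsum (m+1) x y = ∑ W : Finset (Fin (m+2)),
      if Fin.last (m+1) ∈ W then x ^ W.card * y ^ (extN (pathGraph (m+2)) W).card else 0 := rfl

lemma Bsum_eq2 (m : ℕ) (x y : ℝ) :
    Bsum (m+2) x y = ∑ W : Finset (Fin (m+3)),
      if Fin.last (m+2) ∈ W then x ^ W.card * y ^ (extN (pathGraph (m+3)) W).card else 0 := rfl

lemma Dsum_eq (j : ℕ) (x y : ℝ) :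
    Dsum (j+1) x y = ∑ W : Finset (Fin (j+2)),
      if Fin.last (j+1) ∉ W then x ^ W.card * y ^ (extN (pathGraph (j+2)) W).card else 0 := rfl

lemma LA (m : ℕ) (x y : ℝ) :
    JP (pathGraph (m+3)) x y
      = (JP (pathGraph (m+2)) x y + (y-1) * Bsum (m+1) x y)
        + (x * JP (pathGraph (m+2)) x y + ((y-1)*x) * Csum m x y) := by
  rw [show JP (pathGraph (m+3)) x y = ∑ W : Finset (Fin (m+3)),
        x ^ W.card * y ^ (extN (pathGraph (m+3)) W).card from rfl,
      sum_split (m+2) (fun W => x ^ W.card * y ^ (extN (pathGraph (m+3)) W).card)]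
  congr 1
  · rw [show JP (pathGraph (m+2)) x y = ∑ W : Finset (Fin (m+2)),
        x ^ W.card * y ^ (extN (pathGraph (m+2)) W).card from rfl,
      Bsum_eq, Finset.mul_sum, ← Finset.sum_add_distrib]
    refine Finset.sum_congr rfl fun W _ => ?_
    exact (term_map (m+1) x y W).trans (pow_ite_term x y _ _ _)
  · rw [show JP (pathGraph (m+2)) x y = ∑ W : Finset (Fin (m+2)),
        x ^ W.card * y ^ (extN (pathGraph (m+2)) W).card from rfl,
      Csum, Finset.mul_sum, Finset.mul_sum, ← Finset.sum_add_distrib]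
    refine Finset.sum_congr rfl fun W _ => ?_
    exact (term_insert m x y W).trans (pow_ite_term2 x y _ _ _)

lemma LB (m : ℕ) (x y : ℝ) :
    Bsum (m+2) x y
      = x * JP (pathGraph (m+2)) x y + ((y-1)*x) * Csum m x y := by
  rw [Bsum_eq2, sum_split (m+2) (fun W =>
    if Fin.last (m+2) ∈ W then x ^ W.card * y ^ (extN (pathGraph (m+3)) W).card else 0)]
  have h1 : ∀ W : Finset (Fin (m+2)),
      (if Fin.last (m+2) ∈ W.map (iemb (m+2)) then
        x ^ (W.map (iemb (m+2))).card
          * y ^ (extN (pathGraph (m+3)) (W.map (iemb (m+2)))).card else 0) = 0 :=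
    fun W => if_neg (last_not_mem_map' W)
  rw [Finset.sum_congr rfl (fun W _ => h1 W), Finset.sum_const_zero, zero_add,
    show JP (pathGraph (m+2)) x y = ∑ W : Finset (Fin (m+2)),
        x ^ W.card * y ^ (extN (pathGraph (m+2)) W).card from rfl,
    Csum, Finset.mul_sum, Finset.mul_sum, ← Finset.sum_add_distrib]
  refine Finset.sum_congr rfl fun W _ => ?_
  rw [if_pos (Finset.mem_insert_self _ _)]
  exact (term_insert m x y W).trans (pow_ite_term2 x y _ _ _)

lemma LC (j : ℕ) (x y : ℝ) : Csum j x y = Dsum j x y := by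
  rw [Csum, sum_split (j+1) (fun W =>
    if Fin.last (j+1) ∉ W ∧ (Fin.last j).castSucc ∉ W then
      x ^ W.card * y ^ (extN (pathGraph (j+2)) W).card else 0)]
  have h2 : ∀ W : Finset (Fin (j+1)),
      (if Fin.last (j+1) ∉ insert (Fin.last (j+1)) (W.map (iemb (j+1)))
          ∧ (Fin.last j).castSucc ∉ insert (Fin.last (j+1)) (W.map (iemb (j+1))) then
        x ^ (insert (Fin.last (j+1)) (W.map (iemb (j+1)))).card
          * y ^ (extN (pathGraph (j+2)) (insert (Fin.last (j+1)) (W.map (iemb (j+1))))).card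
        else 0) = 0 :=
    fun W => if_neg (fun h => h.1 (Finset.mem_insert_self _ _))
  rw [Finset.sum_congr rfl (fun W _ => h2 W), Finset.sum_const_zero, add_zero, Dsum]
  refine Finset.sum_congr rfl fun W _ => ?_
  by_cases h : Fin.last j ∈ W
  · rw [if_neg (fun hc => hc.2 (castSucc_mem_map.mpr h)), if_neg (fun hc => hc h)]
  · rw [if_pos ⟨last_not_mem_map' W, fun hc => h (castSucc_mem_map.mp hc)⟩, if_pos h]
    have := (term_map j x y W).trans (by rw [if_neg h, add_zero] :
      x ^ W.card * y ^ ((extN (pathGraph (j+1)) W).card + (if Fin.last j ∈ W then 1 else 0))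
        = x ^ W.card * y ^ (extN (pathGraph (j+1)) W).card)
    exact this

lemma LD (j : ℕ) (x y : ℝ) :
    Dsum (j+1) x y = JP (pathGraph (j+1)) x y + (y-1) * Bsum j x y := by
  rw [Dsum_eq, sum_split (j+1) (fun W =>
    if Fin.last (j+1) ∉ W then
      x ^ W.card * y ^ (extN (pathGraph (j+2)) W).card else 0)]
  have h2 : ∀ W : Finset (Fin (j+1)),
      (if Fin.last (j+1) ∉ insert (Fin.last (j+1)) (W.map (iemb (j+1))) then
        x ^ (insert (Fin.last (j+1)) (W.map (iemb (j+1)))).card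
          * y ^ (extN (pathGraph (j+2)) (insert (Fin.last (j+1)) (W.map (iemb (j+1))))).card
        else 0) = 0 :=
    fun W => if_neg (fun h => h (Finset.mem_insert_self _ _))
  rw [Finset.sum_congr rfl (fun W _ => h2 W), Finset.sum_const_zero, add_zero,
    show JP (pathGraph (j+1)) x y = ∑ W : Finset (Fin (j+1)),
        x ^ W.card * y ^ (extN (pathGraph (j+1)) W).card from rfl,
    Bsum, Finset.mul_sum, ← Finset.sum_add_distrib]
  refine Finset.sum_congr rfl fun W _ => ?_
  rw [if_pos (last_not_mem_map' W)]
  exact (term_map j x y W).trans (pow_ite_term x y _ _ _)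

lemma LDB (j : ℕ) (x y : ℝ) :
    Dsum j x y + Bsum j x y = JP (pathGraph (j+1)) x y := by
  rw [Dsum, Bsum, JP, ← Finset.sum_add_distrib]
  apply Finset.sum_congr rfl
  intro W _
  by_cases h : Fin.last j ∈ W
  · simp [h]
  · simp [h]

end Aux

theorem J_path_recurrence (n : ℕ) (hn : 4 ≤ n) (x y : ℝ) :
    JP (SimpleGraph.pathGraph n) x y
      = (1 + x) * JP (SimpleGraph.pathGraph (n - 1)) x y
        + x * (y - 1) * (JP (SimpleGraph.pathGraph (n - 2)) x y
            + y * JP (SimpleGraph.pathGraph (n - 3)) x y) := by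
  obtain ⟨m, rfl⟩ : ∃ m, n = m + 4 := ⟨n - 4, by omega⟩
  have h1 : m + 4 - 1 = m + 3 := by omega
  have h2 : m + 4 - 2 = m + 2 := by omega
  have h3 : m + 4 - 3 = m + 1 := by omega
  rw [h1, h2, h3]
  have hA : JP (SimpleGraph.pathGraph (m+4)) x y
      = (JP (SimpleGraph.pathGraph (m+3)) x y + (y-1) * Bsum (m+2) x y)
        + (x * JP (SimpleGraph.pathGraph (m+3)) x y + ((y-1)*x) * Csum (m+1) x y) :=
    LA (m+1) x y
  have hB : Bsum (m+2) x y
      = x * JP (SimpleGraph.pathGraph (m+2)) x y + ((y-1)*x) * Csum m x y := LB m x y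
  have hC1 : Csum (m+1) x y
      = JP (SimpleGraph.pathGraph (m+1)) x y + (y-1) * Bsum m x y := by
    rw [LC (m+1) x y]; exact LD m x y
  have hC0 : Csum m x y = JP (SimpleGraph.pathGraph (m+1)) x y - Bsum m x y := by
    rw [LC m x y]
    have := LDB m x y
    linarith
  rw [hA, hB, hC1, hC0]
  ring
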